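/- The category of pastures has arbitrary coproducts: for any index set I and any family of pastures (P_i)_{i ∈ I}, there exists a pasture Q together with morphisms of pastures i_j : P_j → Q for each j ∈ I, such that for every pasture P' with morphisms f_i : P_i → P' for each i ∈ I there is a unique morphism of pastures g : Q → P' with g ∘ i_j = f_j for all j ∈ I. -/

import Mathlib

universe u v w

/-- A pasture structure on a type `P`: a multiplication, a zero, a one,
an involution `neg`, and a ternary nullset relation `null a b c`
(meaning "`a + b + c = 0`"). -/
structure PastureStr (P : Type u) where
  mul : P → P → P
  zero : P
  one : P
  neg : P → P
  null : P → P → P → Prop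

/-- `P` together with a `PastureStr` is a pasture: `P` is a commutative
monoid with zero whose nonzero elements form an abelian group, `neg` is an
involution fixing `0`, and the nullset is invariant under permutations,
invariant under multiplication, and satisfies `a + b + 0 = 0 ↔ a = -b`. -/
structure PastureStr.IsPasture {P : Type u} (S : PastureStr P) : Prop where
  mul_comm : ∀ a b : P, S.mul a b = S.mul b a
  mul_assoc : ∀ a b c : P, S.mul (S.mul a b) c = S.mul a (S.mul b c)
  one_mul : ∀ a : P, S.mul S.one a = a
  zero_mul : ∀ a : P, S.mul S.zero a = S.zero
  one_ne_zero : S.one ≠ S.zero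
  mul_ne_zero : ∀ a b : P, a ≠ S.zero → b ≠ S.zero → S.mul a b ≠ S.zero
  exists_inv : ∀ a : P, a ≠ S.zero → ∃ b : P, S.mul a b = S.one
  neg_neg : ∀ a : P, S.neg (S.neg a) = a
  neg_zero : S.neg S.zero = S.zero
  null_swap_left : ∀ a b c : P, S.null a b c → S.null b a c
  null_swap_right : ∀ a b c : P, S.null a b c → S.null a c b
  null_mul : ∀ d a b c : P, S.null a b c → S.null (S.mul d a) (S.mul d b) (S.mul d c)
  null_zero : ∀ a b : P, S.null a b S.zero ↔ a = S.neg b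

/-- A morphism of pastures: a multiplicative map preserving `0`, `1`,
the involution and the nullset. -/
structure PastureStr.IsHom {P : Type u} {P' : Type v} (S : PastureStr P) (T : PastureStr P')
    (f : P → P') : Prop where
  map_mul : ∀ a b : P, f (S.mul a b) = T.mul (f a) (f b)
  map_zero : f S.zero = T.zero
  map_one : f S.one = T.one
  map_neg : ∀ a : P, f (S.neg a) = T.neg (f a)
  map_null : ∀ a b c : P, S.null a b c → T.null (f a) (f b) (f c)

open scoped Classical

namespace PC

section Gen
variable {X : Type*} {ST : PastureStr X}

theorem mul_one' (h : ST.IsPasture) (a : X) : ST.mul a ST.one = a := by rw [h.mul_comm]; exact h.one_mul a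
theorem mul_zero' (h : ST.IsPasture) (a : X) : ST.mul a ST.zero = ST.zero := by rw [h.mul_comm]; exact h.zero_mul a
theorem null_triv (h : ST.IsPasture) : ST.null ST.one (ST.neg ST.one) ST.zero := (h.null_zero _ _).2 (h.neg_neg _).symm
theorem neg_eq (h : ST.IsPasture) (a : X) : ST.neg a = ST.mul a (ST.neg ST.one) := by
  have h1 := h.null_mul a _ _ _ (null_triv h)
  rw [mul_one' h, mul_zero' h] at h1
  have h2 := (h.null_zero _ _).1 h1
  calc ST.neg a = ST.neg (ST.neg (ST.mul a (ST.neg ST.one))) := congrArg ST.neg h2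
    _ = ST.mul a (ST.neg ST.one) := h.neg_neg _
theorem neg_mul' (h : ST.IsPasture) (a b : X) : ST.mul (ST.neg a) b = ST.neg (ST.mul a b) := by
  rw [neg_eq h a, neg_eq h (ST.mul a b), h.mul_assoc, h.mul_comm (ST.neg ST.one) b, ← h.mul_assoc]
theorem mul_neg' (h : ST.IsPasture) (a b : X) : ST.mul a (ST.neg b) = ST.neg (ST.mul a b) := by
  rw [h.mul_comm, neg_mul' h, h.mul_comm]
theorem neg_ne_zero (h : ST.IsPasture) {a : X} (ha : a ≠ ST.zero) : ST.neg a ≠ ST.zero := fun hc =>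
  ha (by rw [← h.neg_neg a, hc, h.neg_zero])

/-- commutative monoid structure extracted from a pasture -/
def CM (h : ST.IsPasture) : CommMonoid X where
  mul := ST.mul
  one := ST.one
  mul_assoc := h.mul_assoc
  one_mul := h.one_mul
  mul_one := fun a => mul_one' h a
  mul_comm := h.mul_comm

end Gen

section Main
variable {I : Type v} {P : I → Type u} (S : ∀ i, PastureStr (P i)) (hS : ∀ i, (S i).IsPasture)

/-- finitely supported families of nonzero elements -/
def A : Type (max u v) := {a : ∀ i, P i // (∀ i, a i ≠ (S i).zero) ∧ {i | a i ≠ (S i).one}.Finite}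

def mulA (a b : A S) : A S :=
  ⟨fun i => (S i).mul (a.1 i) (b.1 i),
   fun i => (hS i).mul_ne_zero _ _ (a.2.1 i) (b.2.1 i),
   (a.2.2.union b.2.2).subset (by
     intro i hi
     simp only [Set.mem_union, Set.mem_setOf_eq] at *
     by_contra hc
     push_neg at hc
     exact hi (by rw [hc.1, hc.2, (hS i).one_mul]))⟩

def oneA : A S := ⟨fun i => (S i).one, fun i => (hS i).one_ne_zero,
  Set.finite_empty.subset (fun i hi => (hi rfl).elim)⟩

noncomputable def negAt (j : I) (a : A S) : A S :=
  ⟨Function.update a.1 j ((S j).neg (a.1 j)),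
   fun i => by
     by_cases hij : i = j
     · subst hij; rw [Function.update_self]; exact neg_ne_zero (hS i) (a.2.1 i)
     · rw [Function.update_of_ne hij]; exact a.2.1 i,
   (a.2.2.union (Set.finite_singleton j)).subset (by
     intro i hi
     simp only [Set.mem_union, Set.mem_setOf_eq, Set.mem_singleton_iff] at *
     by_cases hij : i = j
     · exact Or.inr hij
     · rw [Function.update_of_ne hij] at hi; exact Or.inl hi)⟩

def B : Type (max u v) := Bool × A S

def r (x y : B S) : Prop := ∃ j, y.1 = !x.1 ∧ y.2 = negAt S hS j x.2

def G : Type (max u v) := Quot (r S hS)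

abbrev Q : Type (max u v) := Option (G S hS)

def mulB (x y : B S) : B S := (xor x.1 y.1, mulA S hS x.2 y.2)

theorem mulA_comm (a b : A S) : mulA S hS a b = mulA S hS b a :=
  Subtype.ext (funext fun i => (hS i).mul_comm _ _)

theorem negAt_mulA (j : I) (a b : A S) :
    mulA S hS (negAt S hS j a) b = negAt S hS j (mulA S hS a b) := by
  apply Subtype.ext; funext i
  show (S i).mul (Function.update a.1 j ((S j).neg (a.1 j)) i) (b.1 i)
      = Function.update (fun k => (S k).mul (a.1 k) (b.1 k)) j ((S j).neg ((S j).mul (a.1 j) (b.1 j))) i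
  by_cases hij : i = j
  · subst hij; rw [Function.update_self, Function.update_self]; exact neg_mul' (hS i) _ _
  · rw [Function.update_of_ne hij, Function.update_of_ne hij]

theorem r_mul_left {x x' : B S} (hr : r S hS x x') (y : B S) :
    r S hS (mulB S hS x y) (mulB S hS x' y) := by
  obtain ⟨j, h1, h2⟩ := hr
  refine ⟨j, ?_, ?_⟩
  · show xor x'.1 y.1 = !xor x.1 y.1
    rw [h1]; cases x.1 <;> cases y.1 <;> rfl
  · show mulA S hS x'.2 y.2 = negAt S hS j (mulA S hS x.2 y.2)
    rw [h2, negAt_mulA]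

theorem r_mul_right {x x' : B S} (hr : r S hS x x') (y : B S) :
    r S hS (mulB S hS y x) (mulB S hS y x') := by
  obtain ⟨j, h1, h2⟩ := hr
  refine ⟨j, ?_, ?_⟩
  · show xor y.1 x'.1 = !xor y.1 x.1
    rw [h1]; cases x.1 <;> cases y.1 <;> rfl
  · show mulA S hS y.2 x'.2 = negAt S hS j (mulA S hS y.2 x.2)
    rw [h2, mulA_comm S hS y.2, negAt_mulA, mulA_comm]

def mulG : G S hS → G S hS → G S hS :=
  Quot.lift
    (fun x => Quot.lift (fun y => Quot.mk _ (mulB S hS x y))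
      (fun _ _ hr => Quot.sound (r_mul_right S hS hr x)))
    (fun x x' hr => funext (Quot.ind fun y => Quot.sound (r_mul_left S hS hr y)))

def mulQ : Q S hS → Q S hS → Q S hS := fun x y =>
  match x, y with
  | some g, some h => some (mulG S hS g h)
  | _, _ => none

def negB (x : B S) : B S := (!x.1, x.2)

def negG : G S hS → G S hS :=
  Quot.map (negB S) (fun x y ⟨j, h1, h2⟩ => ⟨j, by simp [negB, h1], by simp [negB, h2]⟩)

def negQ : Q S hS → Q S hS := Option.map (negG S hS)

def oneQ : Q S hS := some (Quot.mk _ (false, oneA S hS))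

noncomputable def incA (j : I) (u : P j) (hu : u ≠ (S j).zero) : A S :=
  ⟨Function.update (fun i => (S i).one) j u,
   fun i => by
     by_cases hij : i = j
     · subst hij; rw [Function.update_self]; exact hu
     · rw [Function.update_of_ne hij]; exact (hS i).one_ne_zero,
   (Set.finite_singleton j).subset (by
     intro i hi
     simp only [Set.mem_setOf_eq, Set.mem_singleton_iff] at *
     by_contra hij
     rw [Function.update_of_ne hij] at hi; exact hi rfl)⟩

noncomputable def inc (j : I) (u : P j) : Q S hS :=
  if hu : u = (S j).zero then none else some (Quot.mk _ (false, incA S hS j u hu))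

noncomputable def setOne (j : I) (a : A S) : A S :=
  ⟨Function.update a.1 j (S j).one,
   fun i => by
     by_cases hij : i = j
     · subst hij; rw [Function.update_self]; exact (hS i).one_ne_zero
     · rw [Function.update_of_ne hij]; exact a.2.1 i,
   a.2.2.subset (by
     intro i hi
     simp only [Set.mem_setOf_eq] at *
     by_cases hij : i = j
     · subst hij; rw [Function.update_self] at hi; exact absurd rfl hi
     · rw [Function.update_of_ne hij] at hi; exact hi)⟩

theorem setOne_same (j : I) (a : A S) : (setOne S hS j a).1 j = (S j).one := by
  show Function.update a.1 j (S j).one j = (S j).one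
  rw [Function.update_self]

theorem setOne_noteq {i j : I} (hij : i ≠ j) (a : A S) : (setOne S hS j a).1 i = a.1 i := by
  show Function.update a.1 j (S j).one i = a.1 i
  rw [Function.update_of_ne hij]

theorem negAt_same (j : I) (a : A S) : (negAt S hS j a).1 j = (S j).neg (a.1 j) := by
  show Function.update a.1 j ((S j).neg (a.1 j)) j = (S j).neg (a.1 j)
  rw [Function.update_self]

theorem negAt_noteq {i j : I} (hij : i ≠ j) (a : A S) : (negAt S hS j a).1 i = a.1 i := by
  show Function.update a.1 j ((S j).neg (a.1 j)) i = a.1 i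
  rw [Function.update_of_ne hij]

theorem incA_same (j : I) (u : P j) (hu : u ≠ (S j).zero) : (incA S hS j u hu).1 j = u := by
  show Function.update (fun k => (S k).one) j u j = u
  rw [Function.update_self]

theorem incA_noteq {i j : I} (hij : i ≠ j) (u : P j) (hu : u ≠ (S j).zero) :
    (incA S hS j u hu).1 i = (S i).one := by
  show Function.update (fun k => (S k).one) j u i = (S i).one
  rw [Function.update_of_ne hij]

def NullQ (x y z : Q S hS) : Prop :=
  (z = none ∧ x = negQ S hS y) ∨ (y = none ∧ x = negQ S hS z) ∨ (x = none ∧ y = negQ S hS z) ∨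
  ∃ (j : I) (a b c : P j) (d : Q S hS), (S j).null a b c ∧
    x = mulQ S hS d (inc S hS j a) ∧ y = mulQ S hS d (inc S hS j b) ∧
    z = mulQ S hS d (inc S hS j c)

def SQ : PastureStr (Q S hS) where
  mul := mulQ S hS
  zero := none
  one := oneQ S hS
  neg := negQ S hS
  null := NullQ S hS


-- basic lemmas about Q
theorem mulB_comm (a b : B S) : mulB S hS a b = mulB S hS b a := by
  unfold mulB; rw [Bool.xor_comm, mulA_comm]

theorem mulA_assoc (a b c : A S) :
    mulA S hS (mulA S hS a b) c = mulA S hS a (mulA S hS b c) :=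
  Subtype.ext (funext fun i => (hS i).mul_assoc _ _ _)

theorem mulB_assoc (a b c : B S) :
    mulB S hS (mulB S hS a b) c = mulB S hS a (mulB S hS b c) := by
  unfold mulB; rw [Bool.xor_assoc, mulA_assoc]

theorem oneA_mulA (a : A S) : mulA S hS (oneA S hS) a = a :=
  Subtype.ext (funext fun i => (hS i).one_mul _)

theorem mulQ_comm (x y : Q S hS) : mulQ S hS x y = mulQ S hS y x := by
  cases x with
  | none => cases y <;> rfl
  | some g =>
    cases y with
    | none => rfl
    | some h =>
      refine congrArg some ?_
      induction g using Quot.ind with | _ a =>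
      induction h using Quot.ind with | _ b =>
      exact congrArg (Quot.mk _) (mulB_comm S hS a b)

theorem mulQ_assoc (x y z : Q S hS) :
    mulQ S hS (mulQ S hS x y) z = mulQ S hS x (mulQ S hS y z) := by
  cases x with
  | none => rfl
  | some g =>
    cases y with
    | none => cases z <;> rfl
    | some h =>
      cases z with
      | none => rfl
      | some k =>
        refine congrArg some ?_
        induction g using Quot.ind with | _ a =>
        induction h using Quot.ind with | _ b =>
        induction k using Quot.ind with | _ c =>
        exact congrArg (Quot.mk _) (mulB_assoc S hS a b c)

theorem one_mulQ (x : Q S hS) : mulQ S hS (oneQ S hS) x = x := by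
  cases x with
  | none => rfl
  | some g =>
    refine congrArg some ?_
    induction g using Quot.ind with | _ a =>
    obtain ⟨s, t⟩ := a
    show Quot.mk _ (xor false s, mulA S hS (oneA S hS) t) = Quot.mk _ (s, t)
    rw [Bool.false_xor, oneA_mulA]

theorem mulQ_none_left (x : Q S hS) : mulQ S hS none x = none := by cases x <;> rfl
theorem mulQ_none_right (x : Q S hS) : mulQ S hS x none = none := by cases x <;> rfl

theorem mulQ_eq_none {x y : Q S hS} (h : mulQ S hS x y = none) : x = none ∨ y = none := by
  cases x with
  | none => exact Or.inl rfl
  | some g => cases y with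
    | none => exact Or.inr rfl
    | some h' => exact absurd h (by simp [mulQ])

theorem negQ_negQ (x : Q S hS) : negQ S hS (negQ S hS x) = x := by
  cases x with
  | none => rfl
  | some g =>
    refine congrArg some ?_
    induction g using Quot.ind with | _ a =>
    obtain ⟨s, t⟩ := a
    show Quot.mk _ (!(!s), t) = Quot.mk _ (s, t)
    rw [Bool.not_not]

theorem mulQ_negQ (d y : Q S hS) :
    mulQ S hS d (negQ S hS y) = negQ S hS (mulQ S hS d y) := by
  cases d with
  | none => cases y <;> rfl
  | some g =>
    cases y with
    | none => rfl
    | some h =>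
      refine congrArg some ?_
      induction g using Quot.ind with | _ a =>
      induction h using Quot.ind with | _ b =>
      obtain ⟨s, t⟩ := a
      obtain ⟨u, w⟩ := b
      show Quot.mk _ (xor s !u, mulA S hS t w) = Quot.mk _ (!xor s u, mulA S hS t w)
      rw [Bool.xor_not]

theorem inc_eq_none {j : I} {u : P j} : inc S hS j u = none ↔ u = (S j).zero := by
  by_cases hu : u = (S j).zero <;> simp [inc, hu]

theorem inc_neg (j : I) (u : P j) :
    inc S hS j ((S j).neg u) = negQ S hS (inc S hS j u) := by
  by_cases hu : u = (S j).zero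
  · subst hu; rw [(hS j).neg_zero]; simp [inc]; rfl
  · have hnu : (S j).neg u ≠ (S j).zero := neg_ne_zero (hS j) hu
    rw [inc, dif_neg hnu, inc, dif_neg hu]
    show _ = some (Quot.mk _ (!false, incA S hS j u hu))
    refine congrArg some ?_
    have key : negAt S hS j (incA S hS j u hu) = incA S hS j ((S j).neg u) hnu := by
      apply Subtype.ext; funext i
      show Function.update (incA S hS j u hu).1 j ((S j).neg ((incA S hS j u hu).1 j)) i = _
      by_cases hij : i = j
      · subst hij
        rw [Function.update_self]
        show (S i).neg ((incA S hS i u hu).1 i) = (incA S hS i ((S i).neg u) hnu).1 i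
        show (S i).neg (Function.update (fun k => (S k).one) i u i) =
          Function.update (fun k => (S k).one) i ((S i).neg u) i
        rw [Function.update_self, Function.update_self]
      · rw [Function.update_of_ne hij]
        show (incA S hS j u hu).1 i = (incA S hS j ((S j).neg u) hnu).1 i
        show Function.update (fun k => (S k).one) j u i = Function.update (fun k => (S k).one) j ((S j).neg u) i
        rw [Function.update_of_ne hij, Function.update_of_ne hij]
    rw [← key]
    exact (Quot.sound ⟨j, rfl, rfl⟩).symm

theorem inv_ne_zero' {X : Type*} {ST : PastureStr X} (h : ST.IsPasture) {a b : X}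
    (hab : ST.mul a b = ST.one) : b ≠ ST.zero := fun hc =>
  h.one_ne_zero (by rw [← hab, hc, mul_zero' h])

theorem inv_unique' {X : Type*} {ST : PastureStr X} (h : ST.IsPasture) {a b : X}
    (hab : ST.mul a b = ST.one) (ha : a = ST.one) : b = ST.one := by
  subst ha; rw [h.one_mul] at hab; exact hab

theorem nullQ_swap_left (x y z : Q S hS) (h : NullQ S hS x y z) : NullQ S hS y x z := by
  rcases h with ⟨hz, hxy⟩ | ⟨hy, hxz⟩ | ⟨hx, hyz⟩ | ⟨j, a, b, c, d, hn, hx, hy, hz⟩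
  · exact Or.inl ⟨hz, by rw [hxy, negQ_negQ]⟩
  · exact Or.inr (Or.inr (Or.inl ⟨hy, hxz⟩))
  · exact Or.inr (Or.inl ⟨hx, hyz⟩)
  · exact Or.inr (Or.inr (Or.inr ⟨j, b, a, c, d, (hS j).null_swap_left _ _ _ hn, hy, hx, hz⟩))

theorem nullQ_swap_right (x y z : Q S hS) (h : NullQ S hS x y z) : NullQ S hS x z y := by
  rcases h with ⟨hz, hxy⟩ | ⟨hy, hxz⟩ | ⟨hx, hyz⟩ | ⟨j, a, b, c, d, hn, hx, hy, hz⟩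
  · exact Or.inr (Or.inl ⟨hz, hxy⟩)
  · exact Or.inl ⟨hy, hxz⟩
  · exact Or.inr (Or.inr (Or.inl ⟨hx, by rw [hyz, negQ_negQ]⟩))
  · exact Or.inr (Or.inr (Or.inr ⟨j, a, c, b, d, (hS j).null_swap_right _ _ _ hn, hx, hz, hy⟩))

theorem nullQ_mul (d x y z : Q S hS) (h : NullQ S hS x y z) :
    NullQ S hS (mulQ S hS d x) (mulQ S hS d y) (mulQ S hS d z) := by
  rcases h with ⟨hz, hxy⟩ | ⟨hy, hxz⟩ | ⟨hx, hyz⟩ | ⟨j, a, b, c, d₀, hn, hx, hy, hz⟩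
  · exact Or.inl ⟨by rw [hz]; exact mulQ_none_right S hS d, by rw [hxy, mulQ_negQ]⟩
  · exact Or.inr (Or.inl ⟨by rw [hy]; exact mulQ_none_right S hS d, by rw [hxz, mulQ_negQ]⟩)
  · exact Or.inr (Or.inr (Or.inl ⟨by rw [hx]; exact mulQ_none_right S hS d, by rw [hyz, mulQ_negQ]⟩))
  · refine Or.inr (Or.inr (Or.inr ⟨j, a, b, c, mulQ S hS d d₀, hn, ?_, ?_, ?_⟩)) <;>
      rw [mulQ_assoc]
    · rw [hx]
    · rw [hy]
    · rw [hz]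

theorem nullQ_zero (x y : Q S hS) : NullQ S hS x y none ↔ x = negQ S hS y := by
  constructor
  · rintro (⟨_, hxy⟩ | ⟨hy, hx⟩ | ⟨hx, hy⟩ | ⟨j, a, b, c, d, hn, hx, hy, hz⟩)
    · exact hxy
    · rw [hy]; exact hx
    · rw [hx, hy]; rfl
    · rcases mulQ_eq_none S hS hz.symm with hd | hc
      · subst hd; rw [hx, hy, mulQ_none_left, mulQ_none_left]; rfl
      · have hc0 : c = (S j).zero := (inc_eq_none S hS).1 hc
        subst hc0
        have hab : a = (S j).neg b := ((hS j).null_zero a b).1 hn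
        rw [hx, hy, hab, inc_neg, mulQ_negQ]
  · intro h; exact Or.inl ⟨rfl, h⟩

theorem SQ_is : (SQ S hS).IsPasture where
  mul_comm := mulQ_comm S hS
  mul_assoc := mulQ_assoc S hS
  one_mul := one_mulQ S hS
  zero_mul := mulQ_none_left S hS
  one_ne_zero := by simp [oneQ, SQ]
  mul_ne_zero := by
    intro a b ha hb hc
    cases a with
    | none => exact ha rfl
    | some g => cases b with
      | none => exact hb rfl
      | some h => exact absurd hc (by simp [SQ, mulQ])
  exists_inv := by
    intro x hx
    cases x with
    | none => exact absurd rfl hx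
    | some g =>
      induction g using Quot.ind with | _ a =>
      obtain ⟨s, a⟩ := a
      have spec : ∀ i, (S i).mul (a.1 i)
          (Classical.choose ((hS i).exists_inv (a.1 i) (a.2.1 i))) = (S i).one :=
        fun i => Classical.choose_spec ((hS i).exists_inv (a.1 i) (a.2.1 i))
      refine ⟨some (Quot.mk _ (s, ⟨fun i => Classical.choose ((hS i).exists_inv (a.1 i) (a.2.1 i)),
        fun i => inv_ne_zero' (hS i) (spec i), ?_⟩)), ?_⟩
      · refine a.2.2.subset ?_
        intro i hi
        simp only [Set.mem_setOf_eq] at *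
        exact fun hc => hi (inv_unique' (hS i) (spec i) hc)
      · refine congrArg some (congrArg (Quot.mk _) ?_)
        show (xor s s, mulA S hS a _) = (false, oneA S hS)
        rw [Bool.xor_self]
        exact congrArg _ (Subtype.ext (funext fun i => spec i))
  neg_neg := negQ_negQ S hS
  neg_zero := rfl
  null_swap_left := nullQ_swap_left S hS
  null_swap_right := nullQ_swap_right S hS
  null_mul := nullQ_mul S hS
  null_zero := nullQ_zero S hS


theorem inc_zero (j : I) : inc S hS j (S j).zero = none := by simp [inc]

theorem inc_hom (j : I) : (S j).IsHom (SQ S hS) (inc S hS j) where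
  map_zero := by
    show inc S hS j (S j).zero = (none : Q S hS)
    exact inc_zero S hS j
  map_one := by
    show inc S hS j (S j).one = oneQ S hS
    rw [inc, dif_neg (hS j).one_ne_zero]
    refine congrArg some (congrArg (Quot.mk _) ?_)
    show (false, incA S hS j (S j).one (hS j).one_ne_zero) = (false, oneA S hS)
    refine congrArg _ (Subtype.ext (funext fun i => ?_))
    show Function.update (fun k => (S k).one) j (S j).one i = (S i).one
    by_cases hij : i = j
    · subst hij; rw [Function.update_self]
    · rw [Function.update_of_ne hij]
  map_neg := by
    intro u
    show inc S hS j ((S j).neg u) = negQ S hS (inc S hS j u)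
    exact inc_neg S hS j u
  map_mul := by
    intro u v
    show inc S hS j ((S j).mul u v) = mulQ S hS (inc S hS j u) (inc S hS j v)
    by_cases hu : u = (S j).zero
    · subst hu
      rw [(hS j).zero_mul, inc_zero, mulQ_none_left]
    · by_cases hv : v = (S j).zero
      · subst hv
        rw [mul_zero' (hS j), inc_zero, mulQ_none_right]
      · have huv : (S j).mul u v ≠ (S j).zero := (hS j).mul_ne_zero _ _ hu hv
        rw [inc, dif_neg huv, inc, dif_neg hu, inc, dif_neg hv]
        refine congrArg some (congrArg (Quot.mk _) ?_)
        show (false, incA S hS j ((S j).mul u v) huv)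
            = (xor false false, mulA S hS (incA S hS j u hu) (incA S hS j v hv))
        refine congrArg _ (Subtype.ext (funext fun i => ?_))
        show Function.update (fun k => (S k).one) j ((S j).mul u v) i
            = (S i).mul (Function.update (fun k => (S k).one) j u i)
              (Function.update (fun k => (S k).one) j v i)
        by_cases hij : i = j
        · subst hij; rw [Function.update_self, Function.update_self, Function.update_self]
        · rw [Function.update_of_ne hij, Function.update_of_ne hij, Function.update_of_ne hij,
            (hS i).one_mul]
  map_null := by
    intro a b c hn
    refine Or.inr (Or.inr (Or.inr ⟨j, a, b, c, oneQ S hS, hn, ?_, ?_, ?_⟩)) <;>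
      rw [one_mulQ]

/-- product over a finset relative to a pasture structure -/
noncomputable def prodT {X : Type*} {SX : PastureStr X} (hX : SX.IsPasture)
    (g : I → X) (T : Finset I) : X := @Finset.prod I X (CM hX) T g

theorem prodT_empty {X : Type*} {SX : PastureStr X} (hX : SX.IsPasture) (g : I → X) :
    prodT hX g ∅ = SX.one := by letI := CM hX; exact Finset.prod_empty

theorem prodT_insert {X : Type*} {SX : PastureStr X} (hX : SX.IsPasture) (g : I → X)
    {j : I} {T : Finset I} (hj : j ∉ T) :
    prodT hX g (insert j T) = SX.mul (g j) (prodT hX g T) := by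
  letI := CM hX; exact Finset.prod_insert hj

theorem prodT_congr {X : Type*} {SX : PastureStr X} (hX : SX.IsPasture) {g g' : I → X}
    {T : Finset I} (h : ∀ i ∈ T, g i = g' i) : prodT hX g T = prodT hX g' T := by
  letI := CM hX; exact Finset.prod_congr rfl h

theorem prodT_subset {X : Type*} {SX : PastureStr X} (hX : SX.IsPasture) {g : I → X}
    {T T' : Finset I} (hsub : T ⊆ T') (hg : ∀ i ∈ T', i ∉ T → g i = SX.one) :
    prodT hX g T = prodT hX g T' := by
  letI := CM hX; exact Finset.prod_subset hsub hg

theorem prodT_mul {X : Type*} {SX : PastureStr X} (hX : SX.IsPasture) (g g' : I → X)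
    (T : Finset I) :
    prodT hX (fun i => SX.mul (g i) (g' i)) T = SX.mul (prodT hX g T) (prodT hX g' T) :=
  by letI := CM hX; exact Finset.prod_mul_distrib

theorem prodT_singleton {X : Type*} {SX : PastureStr X} (hX : SX.IsPasture) (g : I → X)
    (j : I) : prodT hX g {j} = g j := by
  exact @Finset.prod_singleton I X (CM hX) g j

theorem prodT_erase {X : Type*} {SX : PastureStr X} (hX : SX.IsPasture) (g : I → X)
    {T : Finset I} {j : I} (hj : j ∈ T) :
    prodT hX g T = SX.mul (g j) (prodT hX g (T.erase j)) := by
  letI := CM hX; exact (Finset.mul_prod_erase T g hj).symm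

theorem hom_prodT {X Y : Type*} {SX : PastureStr X} {SY : PastureStr Y}
    (hX : SX.IsPasture) (hY : SY.IsPasture) {g : X → Y} (hg : SX.IsHom SY g)
    (u : I → X) (T : Finset I) :
    g (prodT hX u T) = prodT hY (fun i => g (u i)) T := by
  classical
  induction T using Finset.induction with
  | empty => rw [prodT_empty, prodT_empty]; exact hg.map_one
  | @insert j T hj ih => rw [prodT_insert hX u hj, prodT_insert hY _ hj, hg.map_mul, ih]

end Main

section Univ
variable {I : Type v} {P : I → Type u} {P' : Type w}

/-- the product of the images of the entries of a finitely supported family -/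
noncomputable def pr (S : ∀ i, PastureStr (P i)) (hS : ∀ i, (S i).IsPasture)
    (S' : PastureStr P') (hS' : S'.IsPasture) (f : ∀ i, P i → P') (a : A S) : P' :=
  prodT hS' (fun i => f i (a.1 i)) a.2.2.toFinset

theorem pr_eq (S : ∀ i, PastureStr (P i)) (hS : ∀ i, (S i).IsPasture)
    (S' : PastureStr P') (hS' : S'.IsPasture) (f : ∀ i, P i → P')
    (hf : ∀ i, (S i).IsHom S' (f i)) (a : A S) (T : Finset I)
    (hT : ∀ i, a.1 i ≠ (S i).one → i ∈ T) :
    pr S hS S' hS' f a = prodT hS' (fun i => f i (a.1 i)) T := by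
  show prodT hS' (fun i => f i (a.1 i)) a.2.2.toFinset = _
  refine prodT_subset hS' ?_ ?_
  · intro i hi; exact hT i ((Set.Finite.mem_toFinset _).1 hi)
  · intro i _ hi
    have h1 : a.1 i = (S i).one := by
      by_contra hne; exact hi ((Set.Finite.mem_toFinset _).2 hne)
    rw [h1]; exact (hf i).map_one

theorem pr_negAt (S : ∀ i, PastureStr (P i)) (hS : ∀ i, (S i).IsPasture)
    (S' : PastureStr P') (hS' : S'.IsPasture) (f : ∀ i, P i → P')
    (hf : ∀ i, (S i).IsHom S' (f i)) (j : I) (a : A S) :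
    pr S hS S' hS' f (negAt S hS j a) = S'.neg (pr S hS S' hS' f a) := by
  classical
  set T := insert j a.2.2.toFinset with hTdef
  have hjT : j ∈ T := Finset.mem_insert_self _ _
  have h1 : pr S hS S' hS' f (negAt S hS j a)
      = prodT hS' (fun i => f i ((negAt S hS j a).1 i)) T := by
    refine pr_eq S hS S' hS' f hf _ _ ?_
    intro i hi
    by_cases hij : i = j
    · subst hij; exact hjT
    · refine Finset.mem_insert_of_mem ((Set.Finite.mem_toFinset _).2 ?_)
      show a.1 i ≠ (S i).one
      rw [negAt_noteq S hS hij a] at hi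
      exact hi
  have h2 : pr S hS S' hS' f a = prodT hS' (fun i => f i (a.1 i)) T := by
    refine pr_eq S hS S' hS' f hf _ _ ?_
    intro i hi
    exact Finset.mem_insert_of_mem ((Set.Finite.mem_toFinset _).2 hi)
  rw [h1, h2, prodT_erase hS' _ hjT, prodT_erase hS' (fun i => f i (a.1 i)) hjT]
  have h3 : prodT hS' (fun i => f i ((negAt S hS j a).1 i)) (T.erase j)
      = prodT hS' (fun i => f i (a.1 i)) (T.erase j) := by
    refine prodT_congr hS' ?_
    intro i hi
    rw [negAt_noteq S hS (Finset.mem_erase.1 hi).1 a]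
  rw [h3, negAt_same S hS j a, (hf j).map_neg, neg_mul' hS']

theorem pr_mulA (S : ∀ i, PastureStr (P i)) (hS : ∀ i, (S i).IsPasture)
    (S' : PastureStr P') (hS' : S'.IsPasture) (f : ∀ i, P i → P')
    (hf : ∀ i, (S i).IsHom S' (f i)) (a b : A S) :
    pr S hS S' hS' f (mulA S hS a b) = S'.mul (pr S hS S' hS' f a) (pr S hS S' hS' f b) := by
  classical
  set T := a.2.2.toFinset ∪ b.2.2.toFinset with hTdef
  have h1 : pr S hS S' hS' f (mulA S hS a b)
      = prodT hS' (fun i => f i ((mulA S hS a b).1 i)) T := by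
    refine pr_eq S hS S' hS' f hf _ _ ?_
    intro i hi
    show i ∈ T
    by_contra hc
    rw [hTdef, Finset.mem_union, not_or] at hc
    have ha : a.1 i = (S i).one := by
      by_contra hne; exact hc.1 ((Set.Finite.mem_toFinset _).2 hne)
    have hb : b.1 i = (S i).one := by
      by_contra hne; exact hc.2 ((Set.Finite.mem_toFinset _).2 hne)
    refine hi ?_
    show (S i).mul (a.1 i) (b.1 i) = (S i).one
    rw [ha, hb, (hS i).one_mul]
  have h2 : pr S hS S' hS' f a = prodT hS' (fun i => f i (a.1 i)) T :=
    pr_eq S hS S' hS' f hf _ _ (fun i hi =>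
      Finset.mem_union_left _ ((Set.Finite.mem_toFinset _).2 hi))
  have h3 : pr S hS S' hS' f b = prodT hS' (fun i => f i (b.1 i)) T :=
    pr_eq S hS S' hS' f hf _ _ (fun i hi =>
      Finset.mem_union_right _ ((Set.Finite.mem_toFinset _).2 hi))
  have h4 : prodT hS' (fun i => f i ((mulA S hS a b).1 i)) T
      = prodT hS' (fun i => S'.mul (f i (a.1 i)) (f i (b.1 i))) T :=
    prodT_congr hS' (fun i _ => (hf i).map_mul _ _)
  rw [h1, h2, h3, h4, prodT_mul]

/-- value of the universal morphism on representatives -/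
noncomputable def gB (S : ∀ i, PastureStr (P i)) (hS : ∀ i, (S i).IsPasture)
    (S' : PastureStr P') (hS' : S'.IsPasture) (f : ∀ i, P i → P') (x : B S) : P' :=
  cond x.1 (S'.neg (pr S hS S' hS' f x.2)) (pr S hS S' hS' f x.2)

theorem gB_respect (S : ∀ i, PastureStr (P i)) (hS : ∀ i, (S i).IsPasture)
    (S' : PastureStr P') (hS' : S'.IsPasture) (f : ∀ i, P i → P')
    (hf : ∀ i, (S i).IsHom S' (f i)) {x y : B S} (hr : r S hS x y) :
    gB S hS S' hS' f x = gB S hS S' hS' f y := by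
  obtain ⟨s, a⟩ := x
  obtain ⟨t, b⟩ := y
  obtain ⟨j, h1, h2⟩ := hr
  show cond s (S'.neg (pr S hS S' hS' f a)) (pr S hS S' hS' f a)
      = cond t (S'.neg (pr S hS S' hS' f b)) (pr S hS S' hS' f b)
  rw [show t = !s from h1, show b = negAt S hS j a from h2, pr_negAt S hS S' hS' f hf]
  cases s
  · show pr S hS S' hS' f a = S'.neg (S'.neg (pr S hS S' hS' f a))
    rw [hS'.neg_neg]
  · rfl

/-- the universal morphism -/
noncomputable def gQ (S : ∀ i, PastureStr (P i)) (hS : ∀ i, (S i).IsPasture)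
    (S' : PastureStr P') (hS' : S'.IsPasture) (f : ∀ i, P i → P')
    (hf : ∀ i, (S i).IsHom S' (f i)) : Q S hS → P' := fun q =>
  match q with
  | none => S'.zero
  | some t => Quot.lift (gB S hS S' hS' f) (fun _ _ hr => gB_respect S hS S' hS' f hf hr) t

theorem gQ_inc (S : ∀ i, PastureStr (P i)) (hS : ∀ i, (S i).IsPasture)
    (S' : PastureStr P') (hS' : S'.IsPasture) (f : ∀ i, P i → P')
    (hf : ∀ i, (S i).IsHom S' (f i)) (j : I) (u : P j) :
    gQ S hS S' hS' f hf (inc S hS j u) = f j u := by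
  by_cases hu : u = (S j).zero
  · subst hu; rw [inc_zero]
    exact ((hf j).map_zero).symm
  · rw [inc, dif_neg hu]
    show pr S hS S' hS' f (incA S hS j u hu) = f j u
    have h1 : pr S hS S' hS' f (incA S hS j u hu)
        = prodT hS' (fun i => f i ((incA S hS j u hu).1 i)) {j} := by
      refine pr_eq S hS S' hS' f hf _ _ ?_
      intro i hi
      rw [Finset.mem_singleton]
      by_contra hij
      exact hi (incA_noteq S hS hij u hu)
    rw [h1, prodT_singleton, incA_same S hS j u hu]

theorem gQ_neg (S : ∀ i, PastureStr (P i)) (hS : ∀ i, (S i).IsPasture)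
    (S' : PastureStr P') (hS' : S'.IsPasture) (f : ∀ i, P i → P')
    (hf : ∀ i, (S i).IsHom S' (f i)) (x : Q S hS) :
    gQ S hS S' hS' f hf (negQ S hS x) = S'.neg (gQ S hS S' hS' f hf x) := by
  cases x with
  | none => exact hS'.neg_zero.symm
  | some g =>
    induction g using Quot.ind with | _ a =>
    obtain ⟨s, a⟩ := a
    cases s
    · rfl
    · exact (hS'.neg_neg _).symm

theorem sgn_mul (S' : PastureStr P') (hS' : S'.IsPasture) (s t : Bool) (p q : P') :
    cond (xor s t) (S'.neg (S'.mul p q)) (S'.mul p q)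
      = S'.mul (cond s (S'.neg p) p) (cond t (S'.neg q) q) := by
  cases s <;> cases t
  · rfl
  · show S'.neg (S'.mul p q) = S'.mul p (S'.neg q)
    rw [mul_neg' hS']
  · show S'.neg (S'.mul p q) = S'.mul (S'.neg p) q
    rw [neg_mul' hS']
  · show S'.mul p q = S'.mul (S'.neg p) (S'.neg q)
    rw [neg_mul' hS', mul_neg' hS', hS'.neg_neg]

theorem gQ_mul (S : ∀ i, PastureStr (P i)) (hS : ∀ i, (S i).IsPasture)
    (S' : PastureStr P') (hS' : S'.IsPasture) (f : ∀ i, P i → P')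
    (hf : ∀ i, (S i).IsHom S' (f i)) (x y : Q S hS) :
    gQ S hS S' hS' f hf (mulQ S hS x y)
      = S'.mul (gQ S hS S' hS' f hf x) (gQ S hS S' hS' f hf y) := by
  cases x with
  | none => rw [mulQ_none_left]; exact (hS'.zero_mul _).symm
  | some g =>
    cases y with
    | none => rw [mulQ_none_right]; exact (mul_zero' hS' _).symm
    | some h =>
      induction g using Quot.ind with | _ a =>
      induction h using Quot.ind with | _ b =>
      obtain ⟨s, a⟩ := a
      obtain ⟨t, b⟩ := b
      show cond (xor s t) (S'.neg (pr S hS S' hS' f (mulA S hS a b)))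
          (pr S hS S' hS' f (mulA S hS a b))
        = S'.mul (cond s (S'.neg (pr S hS S' hS' f a)) (pr S hS S' hS' f a))
            (cond t (S'.neg (pr S hS S' hS' f b)) (pr S hS S' hS' f b))
      rw [pr_mulA S hS S' hS' f hf]
      exact sgn_mul S' hS' s t _ _

theorem gQ_hom (S : ∀ i, PastureStr (P i)) (hS : ∀ i, (S i).IsPasture)
    (S' : PastureStr P') (hS' : S'.IsPasture) (f : ∀ i, P i → P')
    (hf : ∀ i, (S i).IsHom S' (f i)) : (SQ S hS).IsHom S' (gQ S hS S' hS' f hf) where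
  map_mul := gQ_mul S hS S' hS' f hf
  map_zero := rfl
  map_one := by
    show pr S hS S' hS' f (oneA S hS) = S'.one
    have h1 : pr S hS S' hS' f (oneA S hS) = prodT hS' (fun i => f i ((oneA S hS).1 i)) ∅ :=
      pr_eq S hS S' hS' f hf _ _ (fun i hi => absurd rfl hi)
    rw [h1, prodT_empty]
  map_neg := gQ_neg S hS S' hS' f hf
  map_null := by
    intro x y z hn
    rcases hn with ⟨hz, hxy⟩ | ⟨hy, hxz⟩ | ⟨hx, hyz⟩ | ⟨j, a, b, c, d, hn, hx, hy, hz⟩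
    · rw [hz, hxy, gQ_neg S hS S' hS' f hf]
      exact (hS'.null_zero _ _).2 rfl
    · rw [hy, hxz, gQ_neg S hS S' hS' f hf]
      exact hS'.null_swap_right _ _ _ ((hS'.null_zero _ _).2 rfl)
    · rw [hx, hyz, gQ_neg S hS S' hS' f hf]
      exact hS'.null_swap_left _ _ _
        (hS'.null_swap_right _ _ _ ((hS'.null_zero _ _).2 rfl))
    · rw [hx, hy, hz, gQ_mul S hS S' hS' f hf, gQ_mul S hS S' hS' f hf,
        gQ_mul S hS S' hS' f hf, gQ_inc S hS S' hS' f hf, gQ_inc S hS S' hS' f hf,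
        gQ_inc S hS S' hS' f hf]
      exact hS'.null_mul _ _ _ _ ((hf j).map_null _ _ _ hn)

/-- decomposition of elements of the coproduct as products of generators -/
theorem decomp (S : ∀ i, PastureStr (P i)) (hS : ∀ i, (S i).IsPasture) (T : Finset I) :
    ∀ a : A S, (∀ i, a.1 i ≠ (S i).one → i ∈ T) →
      (some (Quot.mk _ (false, a)) : Q S hS)
        = prodT (SQ_is S hS) (fun i => inc S hS i (a.1 i)) T := by
  classical
  induction T using Finset.induction with
  | empty =>
    intro a ha
    have h1 : a = oneA S hS := by
      refine Subtype.ext (funext fun i => ?_)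
      by_contra hne
      exact Finset.notMem_empty i (ha i hne)
    rw [h1, prodT_empty]
    rfl
  | @insert j T hj ih =>
    intro a ha
    have step1 : prodT (SQ_is S hS) (fun i => inc S hS i (a.1 i)) T
        = prodT (SQ_is S hS) (fun i => inc S hS i ((setOne S hS j a).1 i)) T := by
      refine prodT_congr _ ?_
      intro i hi
      have hij : i ≠ j := fun hc => hj (hc ▸ hi)
      rw [setOne_noteq S hS hij a]
    have step2 : (some (Quot.mk _ (false, setOne S hS j a)) : Q S hS)
        = prodT (SQ_is S hS) (fun i => inc S hS i ((setOne S hS j a).1 i)) T := by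
      refine ih (setOne S hS j a) ?_
      intro i hi
      have hij : i ≠ j := by
        intro hc; subst hc
        rw [setOne_same S hS i a] at hi
        exact hi rfl
      rw [setOne_noteq S hS hij a] at hi
      rcases Finset.mem_insert.1 (ha i hi) with hc | hc
      · exact absurd hc hij
      · exact hc
    have step3 : prodT (SQ_is S hS) (fun i => inc S hS i (a.1 i)) T
        = (some (Quot.mk _ (false, setOne S hS j a)) : Q S hS) := step1.trans step2.symm
    rw [prodT_insert _ _ hj, step3]
    show _ = mulQ S hS (inc S hS j (a.1 j)) (some (Quot.mk _ (false, setOne S hS j a)))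
    rw [inc, dif_neg (a.2.1 j)]
    refine congrArg some (congrArg (Quot.mk _) ?_)
    show ((false : Bool), a)
        = (xor false false, mulA S hS (incA S hS j (a.1 j) (a.2.1 j)) (setOne S hS j a))
    refine congrArg _ (Subtype.ext (funext fun i => ?_))
    show a.1 i = (S i).mul ((incA S hS j (a.1 j) (a.2.1 j)).1 i) ((setOne S hS j a).1 i)
    by_cases hij : i = j
    · subst hij
      rw [incA_same S hS i (a.1 i) (a.2.1 i), setOne_same S hS i a, mul_one' (hS i)]
    · rw [incA_noteq S hS hij (a.1 j) (a.2.1 j), setOne_noteq S hS hij a, (hS i).one_mul]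

theorem hom_ext (S : ∀ i, PastureStr (P i)) (hS : ∀ i, (S i).IsPasture)
    (S' : PastureStr P') (hS' : S'.IsPasture) (f : ∀ i, P i → P')
    {g₁ g₂ : Q S hS → P'}
    (h₁ : (SQ S hS).IsHom S' g₁) (hc₁ : ∀ j, g₁ ∘ inc S hS j = f j)
    (h₂ : (SQ S hS).IsHom S' g₂) (hc₂ : ∀ j, g₂ ∘ inc S hS j = f j) : g₁ = g₂ := by
  classical
  have key : ∀ a : A S, g₁ (some (Quot.mk _ (false, a))) = g₂ (some (Quot.mk _ (false, a))) := by
    intro a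
    have hd := decomp S hS a.2.2.toFinset a (fun i hi => (Set.Finite.mem_toFinset _).2 hi)
    rw [hd, hom_prodT (SQ_is S hS) hS' h₁, hom_prodT (SQ_is S hS) hS' h₂]
    refine prodT_congr hS' ?_
    intro i _
    rw [show g₁ (inc S hS i (a.1 i)) = f i (a.1 i) from congrFun (hc₁ i) _,
      show g₂ (inc S hS i (a.1 i)) = f i (a.1 i) from congrFun (hc₂ i) _]
  funext x
  cases x with
  | none => rw [show (none : Q S hS) = (SQ S hS).zero from rfl, h₁.map_zero, h₂.map_zero]
  | some g =>
    induction g using Quot.ind with | _ a =>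
    obtain ⟨s, a⟩ := a
    cases s
    · exact key a
    · have hneg : (some (Quot.mk _ (true, a)) : Q S hS)
          = (SQ S hS).neg (some (Quot.mk _ (false, a))) := rfl
      rw [hneg, h₁.map_neg, h₂.map_neg, key a]

end Univ

theorem main {I : Type v} (P : I → Type u) (S : ∀ i, PastureStr (P i))
    (hS : ∀ i, (S i).IsPasture) :
    ∃ (Q : Type (max u v)) (SQ : PastureStr Q), SQ.IsPasture ∧
      ∃ inc : ∀ j, P j → Q, (∀ j, PastureStr.IsHom (S j) SQ (inc j)) ∧
        ∀ (P' : Type w) (S' : PastureStr P'), S'.IsPasture →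
          ∀ f : ∀ i, P i → P', (∀ i, PastureStr.IsHom (S i) S' (f i)) →
            ∃! g : Q → P', PastureStr.IsHom SQ S' g ∧ ∀ j, g ∘ inc j = f j := by
  refine ⟨Q S hS, SQ S hS, SQ_is S hS, inc S hS, inc_hom S hS, ?_⟩
  intro P' S' hS' f hf
  refine ⟨gQ S hS S' hS' f hf,
    ⟨gQ_hom S hS S' hS' f hf, fun j => funext fun u => gQ_inc S hS S' hS' f hf j u⟩, ?_⟩
  rintro g' ⟨hg', hgc'⟩
  exact hom_ext S hS S' hS' f hg' hgc' (gQ_hom S hS S' hS' f hf)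
    (fun j => funext fun u => gQ_inc S hS S' hS' f hf j u)

end PC

/-- **The category of pastures has arbitrary (set-indexed) coproducts.**
For any index set `I` and family of pastures `(P i)_{i ∈ I}` there is a
pasture `Q` with morphisms `inc j : P j → Q` such that for every pasture `P'`
with morphisms `f i : P i → P'` there is a unique morphism `g : Q → P'`
with `g ∘ inc j = f j` for all `j`. -/


theorem pastures_have_coproducts
    {I : Type v} (P : I → Type u) (S : ∀ i, PastureStr (P i))
    (hS : ∀ i, (S i).IsPasture) :
    ∃ (Q : Type (max u v)) (SQ : PastureStr Q), SQ.IsPasture ∧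
      ∃ inc : ∀ j, P j → Q, (∀ j, PastureStr.IsHom (S j) SQ (inc j)) ∧
        ∀ (P' : Type w) (S' : PastureStr P'), S'.IsPasture →
          ∀ f : ∀ i, P i → P', (∀ i, PastureStr.IsHom (S i) S' (f i)) →
            ∃! g : Q → P', PastureStr.IsHom SQ S' g ∧ ∀ j, g ∘ inc j = f j :=
  PC.main P S hS
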